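/- Let q be a prime power and let u, v be real exponents with 1 < u ≤ 2, 1 ≤ v < ∞ and (u − 1) v ≥ u (i.e. v ≥ u/(u − 1)). Then for every F : H_1(F_q) → ℂ one has ‖M_{H1} F‖_{ℓ^v(P^1(F_q))} ≤ √2 · q^{1 − 1/u} · ‖F‖_{ℓ^u(H_1(F_q))}. -/

import Mathlib

/-!
`K` plays the role of the finite field `F_q` with `q = Fintype.card K` elements
(the cardinality of a finite field is automatically a prime power).
The Heisenberg group `H₁(F_q)` is identified with `K × K × K`.
The projective line `P¹(F_q)` is identified with `Option K`, where `some m`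
corresponds to the direction class `[1 : m]` and `none` to `[0 : 1]`
(every class has a unique such normal form).
-/

noncomputable section

open Finset

/-- Representative direction vector of a projective class. -/
def dirVec {K : Type*} [Field K] : Option K → K × K
  | some m => (1, m)
  | none => (0, 1)

/-- The point of the horizontal line through `p = (x₀, y₀, t₀)` with direction
vector `v = (a, b)` corresponding to the parameter `s`, namely
`(x₀ + s a, y₀ + s b, t₀ + s (x₀ b - y₀ a))`. -/
def hPoint {K : Type*} [Field K] (p : K × K × K) (v : K × K) (s : K) : K × K × K :=
  (p.1 + s * v.1, p.2.1 + s * v.2, p.2.2 + s * (p.1 * v.2 - p.2.1 * v.1))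

/-- Sum of `|F|` along the horizontal line through `p` with direction vector `v`. -/
def lineSumH1 {K : Type*} [Field K] [Fintype K] (Fc : K × K × K → ℂ)
    (p : K × K × K) (v : K × K) : ℝ :=
  ∑ s : K, ‖Fc (hPoint p v s)‖

/-- The horizontal Kakeya maximal function `M_{H₁} F` on `P¹(F_q) ≃ Option K`:
the maximum over all base points `p` of the sum of `|F|` along the horizontal
line through `p` in the given direction. -/
def MH1 {K : Type*} [Field K] [Fintype K] (Fc : K × K × K → ℂ) (d : Option K) : ℝ :=
  Finset.univ.sup' ⟨((0 : K), (0 : K), (0 : K)), Finset.mem_univ _⟩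
    fun p => lineSumH1 Fc p (dirVec d)

/-- `ℓ^r` norm of a complex-valued function on a finite set. -/
def lpNormC {X : Type*} [Fintype X] (r : ℝ) (g : X → ℂ) : ℝ :=
  (∑ x, ‖g x‖ ^ r) ^ (1 / r)

/-- `ℓ^r` norm of a real-valued function on a finite set. -/
def lpNormR {X : Type*} [Fintype X] (r : ℝ) (g : X → ℝ) : ℝ :=
  (∑ x, |g x| ^ r) ^ (1 / r)

namespace Stmt6Aux


/-- Two-function Hölder inequality with weights `(1-θ, θ)`. -/
lemma hoelder_two {ι : Type*} [Fintype ι] {θ : ℝ} (h0 : 0 ≤ θ) (h1 : θ ≤ 1)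
    (y z : ι → ℝ) (hy : ∀ i, 0 ≤ y i) (hz : ∀ i, 0 ≤ z i) :
    ∑ i, y i ^ (1 - θ) * z i ^ θ ≤ (∑ i, y i) ^ (1 - θ) * (∑ i, z i) ^ θ := by
  rcases eq_or_lt_of_le h0 with h | hθ0
  · simp [← h]
  rcases eq_or_lt_of_le h1 with h | hθ1
  · simp [h]
  have h1θ : 0 < 1 - θ := by linarith
  have hpq : Real.HolderConjugate (1 / (1 - θ)) (1 / θ) := by
    rw [Real.holderConjugate_iff]
    constructor
    · rw [lt_div_iff₀ h1θ]; linarith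
    · rw [one_div, one_div, inv_inv, inv_inv]; ring
  have := Real.inner_le_Lp_mul_Lq_of_nonneg (univ : Finset ι)
      (f := fun i => y i ^ (1 - θ)) (g := fun i => z i ^ θ) hpq
      (fun i _ => Real.rpow_nonneg (hy i) _) (fun i _ => Real.rpow_nonneg (hz i) _)
  calc ∑ i, y i ^ (1 - θ) * z i ^ θ
      ≤ (∑ i, (y i ^ (1 - θ)) ^ (1 / (1 - θ))) ^ (1 / (1 / (1 - θ))) *
        (∑ i, (z i ^ θ) ^ (1 / θ)) ^ (1 / (1 / θ)) := this
    _ = (∑ i, y i) ^ (1 - θ) * (∑ i, z i) ^ θ := by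
        rw [one_div_one_div, one_div_one_div]
        congr 2
        · apply sum_congr rfl; intro i _
          rw [← Real.rpow_mul (hy i), mul_one_div_cancel h1θ.ne', Real.rpow_one]
        · apply sum_congr rfl; intro i _
          rw [← Real.rpow_mul (hz i), mul_one_div_cancel hθ0.ne', Real.rpow_one]

/-- `ℓ^w`-norms are decreasing in `w` (for nonnegative functions on a fintype). -/
lemma lp_mono {ι : Type*} [Fintype ι] {w v : ℝ} (hw : 0 < w) (hwv : w ≤ v)
    (T : ι → ℝ) (hT : ∀ i, 0 ≤ T i) :
    (∑ i, T i ^ v) ^ (1 / v) ≤ (∑ i, T i ^ w) ^ (1 / w) := by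
  have hv : 0 < v := hw.trans_le hwv
  set S := (∑ i, T i ^ w) ^ (1 / w) with hS
  have hsum_w : 0 ≤ ∑ i, T i ^ w := sum_nonneg fun i _ => Real.rpow_nonneg (hT i) w
  have hS0 : 0 ≤ S := Real.rpow_nonneg hsum_w _
  have hSw : S ^ w = ∑ i, T i ^ w := by
    rw [hS, ← Real.rpow_mul hsum_w, one_div_mul_cancel hw.ne', Real.rpow_one]
  have hTle : ∀ i, T i ≤ S := by
    intro i
    have h1 : T i ^ w ≤ S ^ w := by
      rw [hSw]
      exact Finset.single_le_sum (fun j _ => Real.rpow_nonneg (hT j) w) (mem_univ i)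
    have h2 : (T i ^ w) ^ (1 / w) ≤ (S ^ w) ^ (1 / w) :=
      Real.rpow_le_rpow (Real.rpow_nonneg (hT i) w) h1 (by positivity)
    rwa [← Real.rpow_mul (hT i), ← Real.rpow_mul hS0, mul_one_div_cancel hw.ne',
      Real.rpow_one, Real.rpow_one] at h2
  have key : ∀ i, T i ^ v ≤ T i ^ w * S ^ (v - w) := by
    intro i
    rcases eq_or_lt_of_le (hT i) with h0 | hpos
    · rw [← h0, Real.zero_rpow hv.ne', Real.zero_rpow hw.ne', zero_mul]
    · calc T i ^ v = T i ^ w * T i ^ (v - w) := by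
            rw [← Real.rpow_add hpos]; ring_nf
        _ ≤ T i ^ w * S ^ (v - w) :=
            mul_le_mul_of_nonneg_left
              (Real.rpow_le_rpow hpos.le (hTle i) (by linarith))
              (Real.rpow_nonneg (hT i) w)
  have hsv : ∑ i, T i ^ v ≤ S ^ v := by
    calc ∑ i, T i ^ v ≤ ∑ i, T i ^ w * S ^ (v - w) := sum_le_sum fun i _ => key i
      _ = (∑ i, T i ^ w) * S ^ (v - w) := by rw [← sum_mul]
      _ = S ^ w * S ^ (v - w) := by rw [hSw]
      _ = S ^ v := by
          rcases eq_or_lt_of_le hS0 with h0 | hpos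
          · rw [← h0, Real.zero_rpow hw.ne', Real.zero_rpow hv.ne', zero_mul]
          · rw [← Real.rpow_add hpos]; ring_nf
  have : (∑ i, T i ^ v) ^ (1 / v) ≤ (S ^ v) ^ (1 / v) :=
    Real.rpow_le_rpow (sum_nonneg fun i _ => Real.rpow_nonneg (hT i) v) hsv (by positivity)
  rwa [← Real.rpow_mul hS0, mul_one_div_cancel hv.ne', Real.rpow_one] at this



variable {K : Type*} [Field K]

lemma hPoint_inj (p : K × K × K) (d : Option K) :
    Function.Injective fun s => hPoint p (dirVec d) s := by
  intro s t h
  cases d with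
  | none =>
    have := congrArg (fun r : K × K × K => r.2.1) h
    simpa [hPoint, dirVec] using this
  | some m =>
    have := congrArg (fun r : K × K × K => r.1) h
    simpa [hPoint, dirVec] using this

lemma cross_param {d d' : Option K} (hdd : d ≠ d') {p p' : K × K × K} {s s' t t' : K}
    (h1 : hPoint p (dirVec d) s = hPoint p' (dirVec d') s')
    (h2 : hPoint p (dirVec d) t = hPoint p' (dirVec d') t') : s = t := by
  have a1 := congrArg (fun r : K × K × K => r.1) h1
  have b1 := congrArg (fun r : K × K × K => r.2.1) h1
  have a2 := congrArg (fun r : K × K × K => r.1) h2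
  have b2 := congrArg (fun r : K × K × K => r.2.1) h2
  simp only [hPoint] at a1 b1 a2 b2
  cases d with
  | none =>
    cases d' with
    | none => exact absurd rfl hdd
    | some m' =>
      simp only [dirVec] at a1 b1 a2 b2
      have hs' : s' = t' := by linear_combination a2 - a1
      linear_combination b1 - b2 + m' * hs'
  | some m =>
    cases d' with
    | none =>
      simp only [dirVec] at a1 a2
      linear_combination a1 - a2
    | some m' =>
      simp only [dirVec] at a1 b1 a2 b2
      by_contra hst
      apply hdd
      have hne : s - t ≠ 0 := sub_ne_zero.mpr hst
      have h3 : (s - t) * m = (s' - t') * m' := by linear_combination b1 - b2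
      have h4 : s - t = s' - t' := by linear_combination a1 - a2
      have h5 : (s - t) * m = (s - t) * m' := by rw [h3, h4]
      have : m = m' := mul_left_cancel₀ hne h5
      rw [this]



variable {D S Z : Type*} [Fintype D] [Fintype S] [Fintype Z] [DecidableEq Z] [DecidableEq S]
  [DecidableEq D]

/-- Number of parameters `s` with `ℓ d s = z`, as a real number. -/
def cnt (ℓ : D → S → Z) (d : D) (z : Z) : ℝ := ∑ s : S, if ℓ d s = z then 1 else 0

lemma cnt_nonneg (ℓ : D → S → Z) (d : D) (z : Z) : 0 ≤ cnt ℓ d z :=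
  sum_nonneg fun s _ => by positivity

lemma line_sum_eq (ℓ : D → S → Z) (g : Z → ℝ) (d : D) :
    ∑ s, g (ℓ d s) = ∑ z, cnt ℓ d z * g z := by
  calc ∑ s, g (ℓ d s) = ∑ s, ∑ z, (if ℓ d s = z then g z else 0) := by
        apply sum_congr rfl; intro s _
        rw [Finset.sum_ite_eq univ (ℓ d s) g, if_pos (mem_univ _)]
    _ = ∑ z, ∑ s, (if ℓ d s = z then g z else 0) := Finset.sum_comm
    _ = ∑ z, cnt ℓ d z * g z := by
        apply sum_congr rfl; intro z _
        rw [cnt, sum_mul]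
        apply sum_congr rfl; intro s _
        by_cases h : ℓ d s = z <;> simp [h]

lemma J_eq (ℓ : D → S → Z) (d d' : D) :
    ∑ z, cnt ℓ d z * cnt ℓ d' z
      = ∑ s : S, ∑ s' : S, (if ℓ d s = ℓ d' s' then (1 : ℝ) else 0) := by
  calc ∑ z, cnt ℓ d z * cnt ℓ d' z
      = ∑ z, ∑ s, ∑ s', (if ℓ d s = z then (1:ℝ) else 0) * (if ℓ d' s' = z then 1 else 0) := by
        apply sum_congr rfl; intro z _
        rw [cnt, cnt, sum_mul_sum]
    _ = ∑ s, ∑ s', ∑ z, (if ℓ d s = z then (1:ℝ) else 0) * (if ℓ d' s' = z then 1 else 0) := by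
        rw [Finset.sum_comm]
        apply sum_congr rfl; intro s _
        rw [Finset.sum_comm]
    _ = ∑ s, ∑ s', (if ℓ d s = ℓ d' s' then (1 : ℝ) else 0) := by
        apply sum_congr rfl; intro s _
        apply sum_congr rfl; intro s' _
        have : ∀ z, (if ℓ d s = z then (1:ℝ) else 0) * (if ℓ d' s' = z then 1 else 0)
            = if ℓ d s = z then (if ℓ d' s' = z then (1:ℝ) else 0) else 0 := by
          intro z; by_cases h : ℓ d s = z <;> simp [h]
        rw [sum_congr rfl fun z _ => this z, Finset.sum_ite_eq univ (ℓ d s)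
          (fun z => if ℓ d' s' = z then (1:ℝ) else 0), if_pos (mem_univ _)]
        by_cases h : ℓ d s = ℓ d' s' <;> simp [h, eq_comm]

lemma J_diag (ℓ : D → S → Z) {d : D} (hinj : Function.Injective (ℓ d)) :
    ∑ z, cnt ℓ d z * cnt ℓ d z = (Fintype.card S : ℝ) := by
  rw [J_eq]
  have : ∀ s : S, ∑ s' : S, (if ℓ d s = ℓ d s' then (1 : ℝ) else 0) = 1 := by
    intro s
    have : ∀ s' : S, (if ℓ d s = ℓ d s' then (1 : ℝ) else 0) = if s = s' then 1 else 0 := by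
      intro s'; by_cases h : s = s'
      · simp [h]
      · rw [if_neg h, if_neg (fun hc => h (hinj hc))]
    rw [sum_congr rfl fun s' _ => this s']
    simp
  rw [sum_congr rfl fun s _ => this s]
  simp [mul_comm]

lemma J_off (ℓ : D → S → Z) {d d' : D}
    (hinj : ∀ e, Function.Injective (ℓ e))
    (hcross : ∀ {s s' t t' : S}, ℓ d s = ℓ d' s' → ℓ d t = ℓ d' t' → s = t) :
    ∑ z, cnt ℓ d z * cnt ℓ d' z ≤ 1 := by
  rw [J_eq]
  have hprod : ∑ s : S, ∑ s' : S, (if ℓ d s = ℓ d' s' then (1 : ℝ) else 0)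
      = ((univ.filter fun x : S × S => ℓ d x.1 = ℓ d' x.2).card : ℝ) := by
    rw [← Finset.sum_boole]
    exact (Fintype.sum_prod_type fun x : S × S => if ℓ d x.1 = ℓ d' x.2 then (1:ℝ) else 0).symm
  rw [hprod]
  have hcard : (univ.filter fun x : S × S => ℓ d x.1 = ℓ d' x.2).card ≤ 1 := by
    apply Finset.card_le_one.mpr
    intro a ha b hb
    rw [mem_filter] at ha hb
    have h1 : a.1 = b.1 := hcross ha.2 hb.2
    have h2 : a.2 = b.2 := by
      apply hinj d'
      rw [← ha.2, ← hb.2, h1]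
    exact Prod.ext h1 h2
  exact_mod_cast hcard

/-- `L¹ → ℓ^∞`-type bound for the incidence form. -/
lemma B_le_l1 (ℓ : D → S → Z) (hinj : ∀ d, Function.Injective (ℓ d))
    (g : Z → ℝ) (hg : ∀ z, 0 ≤ g z) (c : D → ℝ) (hc : ∀ d, 0 ≤ c d) :
    ∑ d, c d * ∑ s, g (ℓ d s) ≤ (∑ d, c d) * (∑ z, g z) := by
  have h1 : ∀ d, ∑ s, g (ℓ d s) ≤ ∑ z, g z := by
    intro d
    have himg : ∑ z ∈ (univ : Finset S).image (ℓ d), g z = ∑ s, g (ℓ d s) :=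
      Finset.sum_image (fun x _ y _ h => hinj d h)
    rw [← himg]
    exact Finset.sum_le_sum_of_subset_of_nonneg (subset_univ _) fun z _ _ => hg z
  calc ∑ d, c d * ∑ s, g (ℓ d s) ≤ ∑ d, c d * ∑ z, g z :=
        sum_le_sum fun d _ => mul_le_mul_of_nonneg_left (h1 d) (hc d)
    _ = (∑ d, c d) * ∑ z, g z := by rw [sum_mul]

/-- `L² → ℓ²` (Córdoba-type) bound for the incidence form. -/
lemma B_le_l2 (ℓ : D → S → Z) (hinj : ∀ d, Function.Injective (ℓ d))
    (hcross : ∀ ⦃d d' : D⦄, d ≠ d' → ∀ {s s' t t' : S},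
      ℓ d s = ℓ d' s' → ℓ d t = ℓ d' t' → s = t)
    (hcard : Fintype.card D ≤ Fintype.card S + 1) (hS : 1 ≤ Fintype.card S)
    (g : Z → ℝ) (hg : ∀ z, 0 ≤ g z) (c : D → ℝ) (hc : ∀ d, 0 ≤ c d) :
    ∑ d, c d * ∑ s, g (ℓ d s) ≤
      Real.sqrt (2 * (Fintype.card S : ℝ)) * Real.sqrt (∑ z, g z ^ 2) *
        Real.sqrt (∑ d, c d ^ 2) := by
  set A : Z → ℝ := fun z => ∑ d, c d * cnt ℓ d z with hA
  have hB : ∑ d, c d * ∑ s, g (ℓ d s) = ∑ z, A z * g z := by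
    calc ∑ d, c d * ∑ s, g (ℓ d s) = ∑ d, ∑ z, c d * (cnt ℓ d z * g z) := by
          apply sum_congr rfl; intro d _; rw [line_sum_eq, mul_sum]
      _ = ∑ z, ∑ d, c d * (cnt ℓ d z * g z) := Finset.sum_comm
      _ = ∑ z, A z * g z := by
          apply sum_congr rfl; intro z _
          rw [hA, sum_mul]
          apply sum_congr rfl; intro d _; ring
  have hA2 : ∑ z, A z ^ 2 ≤ 2 * (Fintype.card S : ℝ) * ∑ d, c d ^ 2 := by
    have expand : ∑ z, A z ^ 2
        = ∑ d, ∑ d', c d * c d' * ∑ z, cnt ℓ d z * cnt ℓ d' z := by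
      calc ∑ z, A z ^ 2
          = ∑ z, ∑ d, ∑ d', c d * c d' * (cnt ℓ d z * cnt ℓ d' z) := by
            apply sum_congr rfl; intro z _
            rw [sq, hA, sum_mul_sum]
            apply sum_congr rfl; intro d _
            apply sum_congr rfl; intro d' _
            ring
        _ = ∑ d, ∑ d', ∑ z, c d * c d' * (cnt ℓ d z * cnt ℓ d' z) := by
            rw [Finset.sum_comm]
            apply sum_congr rfl; intro d _
            rw [Finset.sum_comm]
        _ = ∑ d, ∑ d', c d * c d' * ∑ z, cnt ℓ d z * cnt ℓ d' z := by
            apply sum_congr rfl; intro d _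
            apply sum_congr rfl; intro d' _
            rw [mul_sum]
    have hJ : ∀ d d', ∑ z, cnt ℓ d z * cnt ℓ d' z
        ≤ ((Fintype.card S : ℝ) - 1) * (if d = d' then 1 else 0) + 1 := by
      intro d d'
      by_cases h : d = d'
      · subst h
        rw [J_diag ℓ (hinj d), if_pos rfl]
        ring_nf
        exact le_refl _
      · rw [if_neg h]
        have := J_off ℓ hinj (fun {s s' t t'} h1 h2 => hcross h h1 h2)
        linarith
    have step1 : ∑ z, A z ^ 2
        ≤ ∑ d, ∑ d', c d * c d' * (((Fintype.card S : ℝ) - 1) * (if d = d' then 1 else 0) + 1) := by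
      rw [expand]
      apply sum_le_sum; intro d _
      apply sum_le_sum; intro d' _
      exact mul_le_mul_of_nonneg_left (hJ d d') (mul_nonneg (hc d) (hc d'))
    have step2 : ∑ d, ∑ d', c d * c d' * (((Fintype.card S : ℝ) - 1) * (if d = d' then 1 else 0) + 1)
        = ((Fintype.card S : ℝ) - 1) * ∑ d, c d ^ 2 + (∑ d, c d) ^ 2 := by
      have inner : ∀ d : D, ∑ d', c d * c d' * (((Fintype.card S : ℝ) - 1) * (if d = d' then 1 else 0) + 1)
          = ((Fintype.card S : ℝ) - 1) * c d ^ 2 + c d * ∑ d', c d' := by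
        intro d
        rw [mul_sum]
        have : ∀ d' : D, c d * c d' * (((Fintype.card S : ℝ) - 1) * (if d = d' then 1 else 0) + 1)
            = ((Fintype.card S : ℝ) - 1) * (if d = d' then c d * c d' else 0) + c d * c d' := by
          intro d'; by_cases h : d = d' <;> simp [h] <;> ring
        rw [sum_congr rfl fun d' _ => this d', sum_add_distrib, ← mul_sum,
          Finset.sum_ite_eq univ d (fun d' => c d * c d'), if_pos (mem_univ _)]
        ring_nf
      rw [sum_congr rfl fun d _ => inner d, sum_add_distrib, ← mul_sum, ← sum_mul, sq]
    have step3 : (∑ d, c d) ^ 2 ≤ ((Fintype.card S : ℝ) + 1) * ∑ d, c d ^ 2 := by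
      have := sq_sum_le_card_mul_sum_sq (s := (univ : Finset D)) (f := c)
      have hcard' : ((univ : Finset D).card : ℝ) ≤ (Fintype.card S : ℝ) + 1 := by
        rw [Finset.card_univ]
        exact_mod_cast hcard
      calc (∑ d, c d) ^ 2 ≤ ((univ : Finset D).card : ℝ) * ∑ d, c d ^ 2 := by exact_mod_cast this
        _ ≤ ((Fintype.card S : ℝ) + 1) * ∑ d, c d ^ 2 :=
            mul_le_mul_of_nonneg_right hcard' (sum_nonneg fun d _ => sq_nonneg _)
    calc ∑ z, A z ^ 2 ≤ ((Fintype.card S : ℝ) - 1) * ∑ d, c d ^ 2 + (∑ d, c d) ^ 2 := by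
          rw [← step2]; exact step1
      _ ≤ ((Fintype.card S : ℝ) - 1) * ∑ d, c d ^ 2 + ((Fintype.card S : ℝ) + 1) * ∑ d, c d ^ 2 := by
          linarith [step3]
      _ = 2 * (Fintype.card S : ℝ) * ∑ d, c d ^ 2 := by ring
  -- Cauchy–Schwarz and conclusion
  have hAnn : ∀ z, 0 ≤ A z := fun z => sum_nonneg fun d _ => mul_nonneg (hc d) (cnt_nonneg ℓ d z)
  have hBnn : 0 ≤ ∑ z, A z * g z := sum_nonneg fun z _ => mul_nonneg (hAnn z) (hg z)
  have cs := Finset.sum_mul_sq_le_sq_mul_sq univ A g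
  have h2 : (∑ z, A z * g z) ^ 2 ≤ (2 * (Fintype.card S : ℝ) * ∑ d, c d ^ 2) * ∑ z, g z ^ 2 := by
    calc (∑ z, A z * g z) ^ 2 ≤ (∑ z, A z ^ 2) * ∑ z, g z ^ 2 := cs
      _ ≤ (2 * (Fintype.card S : ℝ) * ∑ d, c d ^ 2) * ∑ z, g z ^ 2 :=
          mul_le_mul_of_nonneg_right hA2 (sum_nonneg fun z _ => sq_nonneg _)
  have h3 : ∑ z, A z * g z ≤
      Real.sqrt ((2 * (Fintype.card S : ℝ) * ∑ d, c d ^ 2) * ∑ z, g z ^ 2) := by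
    rw [← Real.sqrt_sq hBnn]
    exact Real.sqrt_le_sqrt h2
  rw [hB]
  refine h3.trans (le_of_eq ?_)
  rw [Real.sqrt_mul (by positivity), Real.sqrt_mul (by positivity)]
  ring

end Stmt6Aux

/-- For `1 < u ≤ 2`, `1 ≤ v < ∞` with `(u - 1) v ≥ u`
(i.e. `v ≥ u/(u-1)`),
`‖M_{H₁} F‖_{ℓ^v(P¹(F_q))} ≤ √2 · q^{1 - 1/u} · ‖F‖_{ℓ^u(H₁(F_q))}`. -/
theorem stmt_6 {K : Type*} [Field K] [Fintype K] (u v : ℝ) (hu1 : 1 < u)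
    (hu2 : u ≤ 2) (hv : 1 ≤ v) (hvu : u ≤ (u - 1) * v) (Fc : K × K × K → ℂ) :
    lpNormR v (MH1 Fc) ≤
      Real.sqrt 2 * (Fintype.card K : ℝ) ^ (1 - 1 / u) * lpNormC u Fc := by
  classical
  have hqnat : 1 ≤ Fintype.card K := Fintype.card_pos
  have hq1 : (1:ℝ) ≤ (Fintype.card K : ℝ) := by exact_mod_cast hqnat
  have hq0 : (0:ℝ) < (Fintype.card K : ℝ) := by linarith
  set q : ℝ := (Fintype.card K : ℝ) with hqdef
  have hu0 : (0:ℝ) < u := by linarith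
  have hum1 : (0:ℝ) < u - 1 := by linarith
  set w : ℝ := u / (u - 1) with hwdef
  have hw1 : 1 < w := by rw [hwdef, lt_div_iff₀ hum1]; linarith
  have hw0 : (0:ℝ) < w := by linarith
  have hwv : w ≤ v := by
    rw [hwdef, div_le_iff₀ hum1]
    calc u ≤ (u - 1) * v := hvu
      _ = v * (u - 1) := by ring
  set θ : ℝ := 2 - 2 / u with hθdef
  have hθ0 : 0 < θ := by
    have h2u : 2 / u < 2 := by rw [div_lt_iff₀ hu0]; nlinarith
    rw [hθdef]; linarith
  have hθ1 : θ ≤ 1 := by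
    have h2u : 1 ≤ 2 / u := by rw [le_div_iff₀ hu0]; linarith
    rw [hθdef]; linarith
  have hθhalf : θ / 2 = 1 - 1 / u := by rw [hθdef]; ring
  set f : K × K × K → ℝ := fun z => ‖Fc z‖ with hfdef
  have hf0 : ∀ z, 0 ≤ f z := fun z => norm_nonneg _
  -- maximizing base points and lines
  have hmax : ∀ d : Option K, ∃ p : K × K × K, MH1 Fc d = lineSumH1 Fc p (dirVec d) := by
    intro d
    obtain ⟨p, -, hp⟩ := Finset.exists_mem_eq_sup'
      (⟨((0:K), (0:K), (0:K)), Finset.mem_univ _⟩ : (univ : Finset (K × K × K)).Nonempty)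
      (fun p => lineSumH1 Fc p (dirVec d))
    exact ⟨p, hp⟩
  choose P hP using hmax
  set L : Option K → K → K × K × K := fun d s => hPoint (P d) (dirVec d) s with hLdef
  have hinj : ∀ d, Function.Injective (L d) := fun d => Stmt6Aux.hPoint_inj (P d) d
  have hcross : ∀ ⦃d d' : Option K⦄, d ≠ d' → ∀ {s s' t t' : K},
      L d s = L d' s' → L d t = L d' t' → s = t := by
    intro d d' hdd s s' t t' h1 h2
    exact Stmt6Aux.cross_param hdd h1 h2
  set T : Option K → ℝ := fun d => MH1 Fc d with hTdef
  have hTline : ∀ d, T d = ∑ s, f (L d s) := by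
    intro d
    have h := hP d
    show MH1 Fc d = _
    rw [h]
    simp only [lineSumH1, hfdef, hLdef]
  have hT0 : ∀ d, 0 ≤ T d := by
    intro d; rw [hTline d]; exact sum_nonneg fun s _ => hf0 _
  set Nf : ℝ := ∑ z, f z ^ u with hNfdef
  have hNf0 : 0 ≤ Nf := sum_nonneg fun z _ => Real.rpow_nonneg (hf0 z) u
  set Sg : ℝ := ∑ d, T d ^ w with hSgdef
  have hSg0 : 0 ≤ Sg := sum_nonneg fun d _ => Real.rpow_nonneg (hT0 d) w
  set b : Option K → ℝ := fun d => T d ^ (w - 1) with hbdef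
  have hb0 : ∀ d, 0 ≤ b d := fun d => Real.rpow_nonneg (hT0 d) _
  have hwu : (w - 1) * u = w := by rw [hwdef]; field_simp; ring
  have hbu : ∀ d, b d ^ u = T d ^ w := by
    intro d
    simp only [hbdef]
    rw [← Real.rpow_mul (hT0 d), hwu]
  have hbhalf : ∀ d, (b d ^ (u / 2)) ^ 2 = T d ^ w := by
    intro d
    rw [← Real.rpow_natCast (b d ^ (u / 2)) 2, ← Real.rpow_mul (hb0 d)]
    rw [show u / 2 * ((2:ℕ):ℝ) = u by push_cast; ring]
    exact hbu d
  have hbT : ∀ d, b d * T d = T d ^ w := by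
    intro d
    rcases eq_or_lt_of_le (hT0 d) with h0 | hpos
    · simp only [hbdef, ← h0]
      rw [Real.zero_rpow (by linarith : w - 1 ≠ 0), Real.zero_rpow hw0.ne', mul_zero]
    · simp only [hbdef]
      calc T d ^ (w - 1) * T d = T d ^ (w - 1) * T d ^ (1:ℝ) := by rw [Real.rpow_one]
        _ = T d ^ ((w - 1) + 1) := (Real.rpow_add hpos _ _).symm
        _ = T d ^ w := by ring_nf
  set x : Option K × K → ℝ := fun ds => b ds.1 * f (L ds.1 ds.2) with hxdef
  have hx0 : ∀ ds, 0 ≤ x ds := fun ds => mul_nonneg (hb0 _) (hf0 _)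
  have e1 : Sg = ∑ ds : Option K × K, x ds := by
    rw [hSgdef, Fintype.sum_prod_type]
    apply sum_congr rfl; intro d _
    simp only [hxdef]
    calc T d ^ w = b d * T d := (hbT d).symm
      _ = ∑ s, b d * f (L d s) := by rw [hTline d, mul_sum]
  have split : ∀ ds : Option K × K, x ds = (x ds ^ u) ^ (1 - θ) * (x ds ^ (u / 2)) ^ θ := by
    intro ds
    rcases eq_or_lt_of_le (hx0 ds) with h0 | hpos
    · rw [← h0, Real.zero_rpow hu0.ne', Real.zero_rpow (by positivity : u / 2 ≠ 0),
        Real.zero_rpow hθ0.ne', mul_zero]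
    · rw [← Real.rpow_mul hpos.le, ← Real.rpow_mul hpos.le, ← Real.rpow_add hpos,
        show u * (1 - θ) + u / 2 * θ = 1 by rw [hθdef]; field_simp; ring, Real.rpow_one]
  have hold : ∑ ds : Option K × K, x ds
      ≤ (∑ ds : Option K × K, x ds ^ u) ^ (1 - θ)
        * (∑ ds : Option K × K, x ds ^ (u / 2)) ^ θ := by
    calc ∑ ds, x ds = ∑ ds, (x ds ^ u) ^ (1 - θ) * (x ds ^ (u / 2)) ^ θ :=
          sum_congr rfl fun ds _ => split ds
      _ ≤ _ := Stmt6Aux.hoelder_two hθ0.le hθ1 _ _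
            (fun ds => Real.rpow_nonneg (hx0 ds) u) (fun ds => Real.rpow_nonneg (hx0 ds) _)
  have l1 : ∑ ds : Option K × K, x ds ^ u ≤ Sg * Nf := by
    have e : ∑ ds : Option K × K, x ds ^ u = ∑ d, b d ^ u * ∑ s, f (L d s) ^ u := by
      rw [Fintype.sum_prod_type]
      apply sum_congr rfl; intro d _
      rw [mul_sum]
      apply sum_congr rfl; intro s _
      simp only [hxdef]
      exact Real.mul_rpow (hb0 d) (hf0 _)
    rw [e]
    have hB := Stmt6Aux.B_le_l1 L hinj (fun z => f z ^ u)
      (fun z => Real.rpow_nonneg (hf0 z) u)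
      (fun d => b d ^ u) (fun d => Real.rpow_nonneg (hb0 d) u)
    calc ∑ d, b d ^ u * ∑ s, f (L d s) ^ u ≤ (∑ d, b d ^ u) * ∑ z, f z ^ u := hB
      _ = Sg * Nf := by
          rw [hNfdef, hSgdef]
          congr 1
          exact sum_congr rfl fun d _ => hbu d
  have l2 : ∑ ds : Option K × K, x ds ^ (u / 2)
      ≤ Real.sqrt (2 * q) * Real.sqrt Nf * Real.sqrt Sg := by
    have e : ∑ ds : Option K × K, x ds ^ (u / 2)
        = ∑ d, b d ^ (u / 2) * ∑ s, f (L d s) ^ (u / 2) := by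
      rw [Fintype.sum_prod_type]
      apply sum_congr rfl; intro d _
      rw [mul_sum]
      apply sum_congr rfl; intro s _
      simp only [hxdef]
      exact Real.mul_rpow (hb0 d) (hf0 _)
    rw [e]
    have hcard : Fintype.card (Option K) ≤ Fintype.card K + 1 := le_of_eq Fintype.card_option
    have hB := Stmt6Aux.B_le_l2 L hinj hcross hcard hqnat
      (fun z => f z ^ (u / 2)) (fun z => Real.rpow_nonneg (hf0 z) _)
      (fun d => b d ^ (u / 2)) (fun d => Real.rpow_nonneg (hb0 d) _)
    have eg : ∑ z, (f z ^ (u / 2)) ^ 2 = Nf := by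
      rw [hNfdef]
      apply sum_congr rfl; intro z _
      rw [← Real.rpow_natCast (f z ^ (u / 2)) 2, ← Real.rpow_mul (hf0 z),
        show u / 2 * ((2:ℕ):ℝ) = u by push_cast; ring]
    have ec : ∑ d, (b d ^ (u / 2)) ^ 2 = Sg := by
      rw [hSgdef]; exact sum_congr rfl fun d _ => hbhalf d
    rw [eg, ec] at hB
    exact hB
  -- combine via interpolation
  have key : Sg ≤ (2 * q) ^ (θ / 2) * Nf ^ (1 / u) * Sg ^ (1 / u) := by
    have hsum_u : 0 ≤ ∑ ds : Option K × K, x ds ^ u :=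
      sum_nonneg fun ds _ => Real.rpow_nonneg (hx0 ds) u
    have hsum_h : 0 ≤ ∑ ds : Option K × K, x ds ^ (u / 2) :=
      sum_nonneg fun ds _ => Real.rpow_nonneg (hx0 ds) _
    have h1 : Sg ≤ (Sg * Nf) ^ (1 - θ)
        * (Real.sqrt (2 * q) * Real.sqrt Nf * Real.sqrt Sg) ^ θ := by
      nth_rewrite 1 [e1]
      refine hold.trans ?_
      exact mul_le_mul
        (Real.rpow_le_rpow hsum_u l1 (by linarith))
        (Real.rpow_le_rpow hsum_h l2 hθ0.le)
        (Real.rpow_nonneg hsum_h θ)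
        (Real.rpow_nonneg (mul_nonneg hSg0 hNf0) _)
    have h2 : (Sg * Nf) ^ (1 - θ) * (Real.sqrt (2 * q) * Real.sqrt Nf * Real.sqrt Sg) ^ θ
        = (2 * q) ^ (θ / 2) * Nf ^ (1 / u) * Sg ^ (1 / u) := by
      have h2q : (0:ℝ) ≤ 2 * q := by linarith
      have h2qN : (0:ℝ) ≤ 2 * q * Nf := mul_nonneg h2q hNf0
      have h2qNS : (0:ℝ) ≤ 2 * q * Nf * Sg := mul_nonneg h2qN hSg0
      have htrip : Real.sqrt (2 * q) * Real.sqrt Nf * Real.sqrt Sg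
          = Real.sqrt (2 * q * Nf * Sg) := by
        rw [Real.sqrt_mul h2qN Sg, Real.sqrt_mul h2q Nf]
      have hpowθ : (Real.sqrt (2 * q * Nf * Sg)) ^ θ
          = (2 * q) ^ (θ / 2) * Nf ^ (θ / 2) * Sg ^ (θ / 2) := by
        rw [Real.sqrt_eq_rpow, ← Real.rpow_mul h2qNS,
          show 1 / 2 * θ = θ / 2 by ring,
          Real.mul_rpow h2qN hSg0, Real.mul_rpow h2q hNf0]
      rw [htrip, hpowθ, Real.mul_rpow hSg0 hNf0]
      have hNfc : Nf ^ (1 - θ) * Nf ^ (θ / 2) = Nf ^ (1 / u) := by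
        rw [← Real.rpow_add' hNf0 (by rw [show (1 - θ) + θ/2 = 1/u by rw [hθdef]; ring]; positivity),
          show (1 - θ) + θ / 2 = 1 / u by rw [hθdef]; ring]
      have hSgc : Sg ^ (1 - θ) * Sg ^ (θ / 2) = Sg ^ (1 / u) := by
        rw [← Real.rpow_add' hSg0 (by rw [show (1 - θ) + θ/2 = 1/u by rw [hθdef]; ring]; positivity),
          show (1 - θ) + θ / 2 = 1 / u by rw [hθdef]; ring]
      calc Sg ^ (1-θ) * Nf ^ (1-θ) * ((2*q) ^ (θ/2) * Nf ^ (θ/2) * Sg ^ (θ/2))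
          = (2*q) ^ (θ/2) * (Nf ^ (1-θ) * Nf ^ (θ/2)) * (Sg ^ (1-θ) * Sg ^ (θ/2)) := by ring
        _ = (2 * q) ^ (θ / 2) * Nf ^ (1 / u) * Sg ^ (1 / u) := by rw [hNfc, hSgc]
    rw [← h2]; exact h1
  -- extract the ℓ^w bound
  have final_w : Sg ^ (1 / w) ≤ (2 * q) ^ (θ / 2) * Nf ^ (1 / u) := by
    have hexp : 1 / w = 1 - 1 / u := by rw [hwdef]; field_simp
    rcases eq_or_lt_of_le hSg0 with h0 | hpos
    · rw [← h0, Real.zero_rpow (by positivity : (1:ℝ) / w ≠ 0)]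
      positivity
    · have hsplit : Sg = Sg ^ (1 - 1 / u) * Sg ^ (1 / u) := by
        rw [← Real.rpow_add hpos, show (1 - 1/u) + 1/u = 1 by ring, Real.rpow_one]
      have hk := key
      nth_rewrite 1 [hsplit] at hk
      have := le_of_mul_le_mul_right hk (Real.rpow_pos_of_pos hpos (1 / u))
      rwa [hexp]
  -- the constant
  have hconst : (2 * q) ^ (θ / 2) ≤ Real.sqrt 2 * q ^ (1 - 1 / u) := by
    rw [Real.mul_rpow (by norm_num : (0:ℝ) ≤ 2) hq0.le, hθhalf]
    apply mul_le_mul_of_nonneg_right ?_ (Real.rpow_nonneg hq0.le _)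
    rw [Real.sqrt_eq_rpow]
    apply Real.rpow_le_rpow_of_exponent_le (by norm_num)
    have : 1 / 2 ≤ 1 / u := one_div_le_one_div_of_le hu0 hu2
    linarith
  -- assemble
  have mono := Stmt6Aux.lp_mono hw0 hwv T hT0
  simp only [lpNormR, lpNormC]
  have habs : (∑ d, |MH1 Fc d| ^ v) = ∑ d, T d ^ v := by
    apply sum_congr rfl; intro d _
    rw [show MH1 Fc d = T d from rfl, abs_of_nonneg (hT0 d)]
  rw [habs]
  calc (∑ d, T d ^ v) ^ (1 / v) ≤ (∑ d, T d ^ w) ^ (1 / w) := mono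
    _ = Sg ^ (1 / w) := by rw [hSgdef]
    _ ≤ (2 * q) ^ (θ / 2) * Nf ^ (1 / u) := final_w
    _ ≤ Real.sqrt 2 * q ^ (1 - 1 / u) * Nf ^ (1 / u) :=
        mul_le_mul_of_nonneg_right hconst (Real.rpow_nonneg hNf0 _)
    _ = Real.sqrt 2 * q ^ (1 - 1 / u) * (∑ z, ‖Fc z‖ ^ u) ^ (1 / u) := by
        rw [hNfdef]
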